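/- With K and ε defined as the quotient construction (K(b) = T(b)/∼ with ε_a(x) = [(x, id_{F(a)})]), the pair (K, ε) satisfies the universal property of the left Kan extension: for any functor K' : B → Set and natural transformation ε' : X ⟹ K' ∘ F there is a unique natural transformation α : K ⟹ K' with ε' = (αF) ∘ ε, namely α_b[(x, p)] = K'(p)(ε'_a(x)). -/

import Mathlib

open CategoryTheory

/-- The generating relation on `⨆ₐ X(a) × Hom_B(F(a), b)`:
`(x, F(f) ≫ p) ∼ (X(f)(x), p)` for `f : a ⟶ a'` and `p : F(a') ⟶ b`. -/
def KanRel {A B : Type} [SmallCategory A] [SmallCategory B]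
    (F : A ⥤ B) (X : A ⥤ Type) (b : B)
    (t t' : Σ a : A, X.obj a × (F.obj a ⟶ b)) : Prop :=
  ∃ f : t.1 ⟶ t'.1, t'.2.1 = X.map f t.2.1 ∧ t.2.2 = F.map f ≫ t'.2.2

/-- The quotient construction `K : B ⥤ Type`, `K(b) = T(b)/∼`, acting on
morphisms by post-composition in the second coordinate. -/
def KanExt {A B : Type} [SmallCategory A] [SmallCategory B]
    (F : A ⥤ B) (X : A ⥤ Type) : B ⥤ Type where
  obj b := Quot (KanRel F X b)
  map {b b'} q :=
    TypeCat.ofHom (Quot.lift (fun t => Quot.mk (KanRel F X b') ⟨t.1, t.2.1, t.2.2 ≫ q⟩)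
      (by
        rintro t t' ⟨f, hx, hp⟩
        apply Quot.sound
        exact ⟨f, hx, by simp [hp]⟩))
  map_id b := by
    ext x
    induction x using Quot.ind
    simp
  map_comp q q' := by
    ext x
    induction x using Quot.ind
    simp

/-- The unit `ε_a : X(a) → K(F(a))`, `x ↦ [(x, id_{F(a)})]`. -/
def KanUnit {A B : Type} [SmallCategory A] [SmallCategory B]
    (F : A ⥤ B) (X : A ⥤ Type) : X ⟶ F ⋙ KanExt F X where
  app a := TypeCat.ofHom (fun x => Quot.mk (KanRel F X (F.obj a)) ⟨a, x, 𝟙 (F.obj a)⟩)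
  naturality a a' f := by
    ext x
    exact (Quot.sound ⟨f, rfl, by simp⟩).symm

/-- The candidate factorization `α`. -/
def KanDescend {A B : Type} [SmallCategory A] [SmallCategory B]
    (F : A ⥤ B) (X : A ⥤ Type) (K' : B ⥤ Type) (ε' : X ⟶ F ⋙ K') :
    KanExt F X ⟶ K' where
  app b :=
    TypeCat.ofHom (Quot.lift (fun t => K'.map t.2.2 (ε'.app t.1 t.2.1))
      (by
        rintro ⟨a, x, p⟩ ⟨a', x', p'⟩ ⟨f, hx, hp⟩
        dsimp at hx hp ⊢
        rw [hx, hp]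
        have := ConcreteCategory.congr_hom (ε'.naturality f) x
        simp only [Functor.comp_map, types_comp_apply] at this
        rw [FunctorToTypes.map_comp_apply, this]))
  naturality b b' q := by
    ext t
    induction t using Quot.ind with
    | _ t => simp [KanExt, FunctorToTypes.map_comp_apply]

theorem kanExt_lemma {A B : Type}
    [SmallCategory A] [SmallCategory B] (F : A ⥤ B) (X : A ⥤ Type)
    (K' : B ⥤ Type) (ε' : X ⟶ F ⋙ K')
    (α : KanExt F X ⟶ K') (h : ε' = KanUnit F X ≫ Functor.whiskerLeft F α)
    (b : B) (t : Σ a : A, X.obj a × (F.obj a ⟶ b)) :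
    α.app b (Quot.mk (KanRel F X b) t) = K'.map t.2.2 (ε'.app t.1 t.2.1) := by
  obtain ⟨a, x, p⟩ := t
  have h1 : ε'.app a x = α.app (F.obj a) (Quot.mk _ ⟨a, x, 𝟙 (F.obj a)⟩) := by
    rw [h]; rfl
  have h2 := NatTrans.naturality_apply α p (Quot.mk (KanRel F X (F.obj a)) ⟨a, x, 𝟙 (F.obj a)⟩)
  have h3 : (KanExt F X).map p (Quot.mk (KanRel F X (F.obj a)) ⟨a, x, 𝟙 (F.obj a)⟩)
      = Quot.mk (KanRel F X b) ⟨a, x, p⟩ := by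
    simp [KanExt]
    change Quot.mk (KanRel F X b) ⟨a, x, 𝟙 (F.obj a) ≫ p⟩ = _
    rw [Category.id_comp]
  rw [h1, ← h2, h3]

/-- The quotient construction `(K, ε)` satisfies the universal property of the
left Kan extension: every `(K', ε')` factors through it via a unique natural
transformation `α`, and the unique `α` is given by
`α_b [(x, p)] = K'(p)(ε'_a(x))`. -/
theorem kanExt_universal_property {A B : Type}
    [SmallCategory A] [SmallCategory B] (F : A ⥤ B) (X : A ⥤ Type)
    (K' : B ⥤ Type) (ε' : X ⟶ F ⋙ K') :
    (∃! α : KanExt F X ⟶ K', ε' = KanUnit F X ≫ Functor.whiskerLeft F α) ∧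
    (∀ α : KanExt F X ⟶ K', ε' = KanUnit F X ≫ Functor.whiskerLeft F α →
      ∀ (b : B) (t : Σ a : A, X.obj a × (F.obj a ⟶ b)),
        α.app b (Quot.mk (KanRel F X b) t) = K'.map t.2.2 (ε'.app t.1 t.2.1)) := by
  refine ⟨⟨KanDescend F X K' ε', ?_, ?_⟩, fun α h b t => kanExt_lemma F X K' ε' α h b t⟩
  · ext a x
    simp [KanDescend, KanUnit]
    change _ = K'.map (𝟙 _) (ε'.app a x)
    simp
  · intro α h
    ext b t
    induction t using Quot.ind with
    | _ t => exact kanExt_lemma F X K' ε' α h b t
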